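/- Let a, b ∈ {-1, 0, 1} be real numbers. The cubic form x₁³ + 3a·x₁²x₂ + 3b·x₁x₂² + x₂³ is strictly positive for all (x₁, x₂) with x₁ ≥ 0, x₂ ≥ 0, (x₁, x₂) ≠ (0,0) if and only if a + b ≥ 0. -/

import Mathlib

theorem stmt_0 (a b : ℝ) (ha : a ∈ ({-1, 0, 1} : Set ℝ)) (hb : b ∈ ({-1, 0, 1} : Set ℝ)) :
    (∀ x₁ x₂ : ℝ, 0 ≤ x₁ → 0 ≤ x₂ → (x₁, x₂) ≠ (0, 0) →
      0 < x₁^3 + 3*a*x₁^2*x₂ + 3*b*x₁*x₂^2 + x₂^3) ↔ a + b ≥ 0 := by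
  simp only [Set.mem_insert_iff, Set.mem_singleton_iff] at ha hb
  constructor
  · intro h
    have h11 := h 1 1 (by norm_num) (by norm_num) (by norm_num)
    rcases ha with ha | ha | ha <;> rcases hb with hb | hb | hb <;> subst ha <;> subst hb <;>
      revert h11 <;> norm_num <;> linarith
  · intro hab x y hx hy hne
    have hxy : x ≠ 0 ∨ y ≠ 0 := by
      by_contra hc
      push_neg at hc
      exact hne (by simp [hc.1, hc.2])
    have hx' : 0 < x ∨ 0 < y := by
      rcases hxy with h | h
      · exact Or.inl (lt_of_le_of_ne hx (Ne.symm h))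
      · exact Or.inr (lt_of_le_of_ne hy (Ne.symm h))
    rcases ha with ha | ha | ha <;> rcases hb with hb | hb | hb <;> subst ha <;> subst hb <;>
        try linarith
    · -- a = -1, b = 1
      rcases hx' with h | h <;>
        nlinarith [sq_nonneg (x - 2*y), sq_nonneg x, sq_nonneg y, mul_nonneg hx hy,
          mul_nonneg hx (sq_nonneg (x - 2*y)), pow_pos h 3, mul_nonneg hy (sq_nonneg x)]
    · -- a = 0, b = 0
      rcases hx' with h | h <;>
        nlinarith [pow_pos h 3, mul_nonneg (mul_nonneg hx hx) hy, mul_nonneg hx (mul_nonneg hy hy)]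
    · -- a = 0, b = 1
      rcases hx' with h | h <;>
        nlinarith [pow_pos h 3, mul_nonneg (mul_nonneg hx hx) hy, mul_nonneg hx (mul_nonneg hy hy)]
    · -- a = 1, b = -1
      rcases hx' with h | h <;>
        nlinarith [sq_nonneg (2*x - y), pow_pos h 3, mul_nonneg hy (sq_nonneg (2*x - y)),
          mul_nonneg hx (mul_nonneg hy hy), mul_nonneg (mul_nonneg hx hx) hy]
    · -- a = 1, b = 0
      rcases hx' with h | h <;>
        nlinarith [pow_pos h 3, mul_nonneg (mul_nonneg hx hx) hy, mul_nonneg hx (mul_nonneg hy hy)]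
    · -- a = 1, b = 1
      rcases hx' with h | h <;>
        nlinarith [pow_pos h 3, mul_nonneg (mul_nonneg hx hx) hy, mul_nonneg hx (mul_nonneg hy hy)]
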